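/- Let h_κ be as above (inverse of t ↦ ∫_0^t [G^{-1}(τ)]^{-κ} dτ) with 1 ≤ κ < i_G. Then the Young conjugate h_κ* satisfies h_κ*(t) ≈ G(t^{1/κ}) with constants depending only on i_G, s_G, κ. -/

import Mathlib

open Real Set MeasureTheory intervalIntegral

lemma ratio_upper {G g : ℝ → ℝ} {c : ℝ}
    (hG' : ∀ t, 0 < t → HasDerivAt G (g t) t)
    (hc : ∀ t, 0 < t → t * g t ≤ c * G t)
    {a b : ℝ} (ha : 0 < a) (hab : a ≤ b) :
    G b * a ^ c ≤ G a * b ^ c := by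
  have hb : 0 < b := ha.trans_le hab
  set F : ℝ → ℝ := fun t => G t * t ^ (-c) with hF
  have hF' : ∀ t, 0 < t →
      HasDerivAt F (g t * t ^ (-c) + G t * ((-c) * t ^ (-c - 1))) t := by
    intro t ht
    exact (hG' t ht).mul (Real.hasDerivAt_rpow_const (Or.inl ht.ne'))
  have hanti : AntitoneOn F (Icc a b) := by
    apply antitoneOn_of_deriv_nonpos (convex_Icc a b)
    · intro t ht
      exact (hF' t (ha.trans_le ht.1)).continuousAt.continuousWithinAt
    · intro t ht
      rw [interior_Icc] at ht
      exact (hF' t (ha.trans ht.1)).differentiableAt.differentiableWithinAt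
    · intro t ht
      rw [interior_Icc] at ht
      have ht0 : 0 < t := ha.trans ht.1
      rw [(hF' t ht0).deriv]
      have h2 := hc t ht0
      have hts : t ^ (-c) = t * t ^ (-c - 1) := by
        rw [show t * t ^ (-c - 1) = t ^ (1:ℝ) * t ^ (-c - 1) by rw [Real.rpow_one],
          ← Real.rpow_add ht0]
        ring_nf
      have hp : (0:ℝ) ≤ t ^ (-c - 1) := Real.rpow_nonneg ht0.le _
      rw [hts]
      nlinarith [mul_le_mul_of_nonneg_right h2 hp]
  have key : F b ≤ F a := hanti ⟨le_rfl, hab⟩ ⟨hab, le_rfl⟩ hab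
  have e1 : b ^ (-c) * b ^ c = 1 := by rw [← Real.rpow_add hb]; simp
  have e2 : a ^ (-c) * a ^ c = 1 := by rw [← Real.rpow_add ha]; simp
  have h3 := mul_le_mul_of_nonneg_right key
    (mul_nonneg (Real.rpow_nonneg ha.le c) (Real.rpow_nonneg hb.le c))
  simp only [hF] at h3
  calc G b * a ^ c = G b * a ^ c * (b ^ (-c) * b ^ c) := by rw [e1, mul_one]
    _ = G b * b ^ (-c) * (a ^ c * b ^ c) := by ring
    _ ≤ G a * a ^ (-c) * (a ^ c * b ^ c) := h3
    _ = G a * b ^ c * (a ^ (-c) * a ^ c) := by ring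
    _ = G a * b ^ c := by rw [e2, mul_one]

lemma ratio_lower {G g : ℝ → ℝ} {c : ℝ}
    (hG' : ∀ t, 0 < t → HasDerivAt G (g t) t)
    (hc : ∀ t, 0 < t → c * G t ≤ t * g t)
    {a b : ℝ} (ha : 0 < a) (hab : a ≤ b) :
    G a * b ^ c ≤ G b * a ^ c := by
  have hb : 0 < b := ha.trans_le hab
  set F : ℝ → ℝ := fun t => G t * t ^ (-c) with hF
  have hF' : ∀ t, 0 < t →
      HasDerivAt F (g t * t ^ (-c) + G t * ((-c) * t ^ (-c - 1))) t := by
    intro t ht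
    exact (hG' t ht).mul (Real.hasDerivAt_rpow_const (Or.inl ht.ne'))
  have hmono : MonotoneOn F (Icc a b) := by
    apply monotoneOn_of_deriv_nonneg (convex_Icc a b)
    · intro t ht
      exact (hF' t (ha.trans_le ht.1)).continuousAt.continuousWithinAt
    · intro t ht
      rw [interior_Icc] at ht
      exact (hF' t (ha.trans ht.1)).differentiableAt.differentiableWithinAt
    · intro t ht
      rw [interior_Icc] at ht
      have ht0 : 0 < t := ha.trans ht.1
      rw [(hF' t ht0).deriv]
      have h2 := hc t ht0
      have hts : t ^ (-c) = t * t ^ (-c - 1) := by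
        rw [show t * t ^ (-c - 1) = t ^ (1:ℝ) * t ^ (-c - 1) by rw [Real.rpow_one],
          ← Real.rpow_add ht0]
        ring_nf
      have hp : (0:ℝ) ≤ t ^ (-c - 1) := Real.rpow_nonneg ht0.le _
      rw [hts]
      nlinarith [mul_le_mul_of_nonneg_right h2 hp]
  have key : F a ≤ F b := hmono ⟨le_rfl, hab⟩ ⟨hab, le_rfl⟩ hab
  have e1 : b ^ (-c) * b ^ c = 1 := by rw [← Real.rpow_add hb]; simp
  have e2 : a ^ (-c) * a ^ c = 1 := by rw [← Real.rpow_add ha]; simp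
  have h3 := mul_le_mul_of_nonneg_right key
    (mul_nonneg (Real.rpow_nonneg ha.le c) (Real.rpow_nonneg hb.le c))
  simp only [hF] at h3
  calc G a * b ^ c = G a * b ^ c * (a ^ (-c) * a ^ c) := by rw [e2, mul_one]
    _ = G a * a ^ (-c) * (a ^ c * b ^ c) := by ring
    _ ≤ G b * b ^ (-c) * (a ^ c * b ^ c) := h3
    _ = G b * a ^ c * (b ^ (-c) * b ^ c) := by ring
    _ = G b * a ^ c := by rw [e1, mul_one]

/-- The Young conjugate of h_κ satisfies h_κ*(t) ≈ G(t^{1/κ}). -/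
theorem h_kappa_conjugate_comparable
    (G g Ginv : ℝ → ℝ) (iG sG κ : ℝ)
    (hG' : ∀ t, 0 < t → HasDerivAt G (g t) t)
    (hGpos : ∀ t, 0 < t → 0 < G t)
    (hgpos : ∀ t, 0 < t → 0 < g t)
    (h1 : 1 < iG) (hle : iG ≤ sG)
    (hbd : ∀ t, 0 < t → iG * G t ≤ t * g t ∧ t * g t ≤ sG * G t)
    (hκ₁ : 1 ≤ κ) (hκ₂ : κ < iG)
    (hGinv : ∀ t, 0 ≤ t → Ginv (G t) = t ∧ G (Ginv t) = t ∧ 0 ≤ Ginv t)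
    (hinv hκfun : ℝ → ℝ)
    (hhinv : ∀ t, hinv t = ∫ τ in (0:ℝ)..t, (Ginv τ) ^ (-κ))
    (hκinv : ∀ t, 0 ≤ t → hκfun (hinv t) = t ∧ hinv (hκfun t) = t) :
    ∃ c₁ c₂ : ℝ, 0 < c₁ ∧ 0 < c₂ ∧ ∀ t, 0 < t →
      (↑(c₁ * G (t ^ (1 / κ))) : EReal) ≤
        (⨆ τ : {τ : ℝ // 0 < τ}, (↑(t * τ.1 - hκfun τ.1) : EReal)) ∧
      (⨆ τ : {τ : ℝ // 0 < τ}, (↑(t * τ.1 - hκfun τ.1) : EReal)) ≤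
        (↑(c₂ * G (t ^ (1 / κ))) : EReal) := by
  have hκ0 : 0 < κ := lt_of_lt_of_le one_pos hκ₁
  have hiG0 : 0 < iG := lt_trans one_pos h1
  have hsG0 : 0 < sG := lt_of_lt_of_le hiG0 hle
  have hiκ : 0 < iG - κ := sub_pos.2 hκ₂
  -- G 0 = 0
  have hGinv00 : Ginv 0 = 0 := by
    rcases eq_or_lt_of_le (hGinv 0 le_rfl).2.2 with h | h
    · exact h.symm
    · exfalso
      have h2 := (hGinv 0 le_rfl).2.1
      have := hGpos _ h
      rw [h2] at this
      exact lt_irrefl 0 this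
  have hG0 : G 0 = 0 := by
    have := (hGinv 0 le_rfl).2.1
    rwa [hGinv00] at this
  -- G strictly increasing on [0,∞)
  have hGmono : ∀ a b : ℝ, 0 ≤ a → a < b → G a < G b := by
    intro a b ha hab
    rcases eq_or_lt_of_le ha with h | h
    · rw [← h] at hab ⊢
      rw [hG0]
      exact hGpos b hab
    · have hs : StrictMonoOn G (Icc a b) := by
        apply strictMonoOn_of_deriv_pos (convex_Icc a b)
        · intro t ht
          exact (hG' t (lt_of_lt_of_le h ht.1)).continuousAt.continuousWithinAt
        · intro t ht
          rw [interior_Icc] at ht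
          rw [(hG' t (h.trans ht.1)).deriv]
          exact hgpos t (h.trans ht.1)
      exact hs ⟨le_rfl, hab.le⟩ ⟨hab.le, le_rfl⟩ hab
  have hGinvpos : ∀ τ : ℝ, 0 < τ → 0 < Ginv τ := by
    intro τ hτ
    rcases eq_or_lt_of_le (hGinv τ hτ.le).2.2 with h | h
    · exfalso
      have h2 := (hGinv τ hτ.le).2.1
      rw [← h, hG0] at h2
      linarith
    · exact h
  have hGinvmono : ∀ τ T : ℝ, 0 ≤ τ → τ ≤ T → Ginv τ ≤ Ginv T := by
    intro τ T h0 hτT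
    by_contra hcon
    push_neg at hcon
    have h1' := hGmono _ _ (hGinv T (h0.trans hτT)).2.2 hcon
    rw [(hGinv T (h0.trans hτT)).2.1, (hGinv τ h0).2.1] at h1'
    linarith
  -- pointwise bound on the integrand
  have hkey : ∀ T : ℝ, 0 < T → ∀ τ ∈ Ioc (0:ℝ) T,
      Ginv τ ^ (-κ) ≤ T ^ (κ/iG) * Ginv T ^ (-κ) * τ ^ (-(κ/iG)) := by
    intro T hT τ hτ
    obtain ⟨hτ0, hτT⟩ := hτ
    have hu : 0 < Ginv τ := hGinvpos τ hτ0
    have hv : 0 < Ginv T := hGinvpos T hT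
    have huv : Ginv τ ≤ Ginv T := hGinvmono τ T hτ0.le hτT
    have hGu : G (Ginv τ) = τ := (hGinv τ hτ0.le).2.1
    have hGv : G (Ginv T) = T := (hGinv T hT.le).2.1
    have h1' : τ * Ginv T ^ iG ≤ T * Ginv τ ^ iG := by
      have := ratio_lower hG' (fun t ht => (hbd t ht).1) hu huv
      rwa [hGu, hGv] at this
    have h2 : (τ * Ginv T ^ iG) ^ (κ/iG) ≤ (T * Ginv τ ^ iG) ^ (κ/iG) :=
      Real.rpow_le_rpow (by positivity) h1' (by positivity)
    have hee : iG * (κ/iG) = κ := by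
      rw [mul_comm]; exact div_mul_cancel₀ κ hiG0.ne'
    have e1 : (τ * Ginv T ^ iG) ^ (κ/iG) = τ ^ (κ/iG) * Ginv T ^ κ := by
      rw [Real.mul_rpow hτ0.le (Real.rpow_nonneg hv.le _), ← Real.rpow_mul hv.le, hee]
    have e2 : (T * Ginv τ ^ iG) ^ (κ/iG) = T ^ (κ/iG) * Ginv τ ^ κ := by
      rw [Real.mul_rpow hT.le (Real.rpow_nonneg hu.le _), ← Real.rpow_mul hu.le, hee]
    rw [e1, e2] at h2
    rw [Real.rpow_neg hu.le, Real.rpow_neg hv.le, Real.rpow_neg hτ0.le]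
    have p1 : 0 < Ginv τ ^ κ := Real.rpow_pos_of_pos hu κ
    have p2 : 0 < Ginv T ^ κ := Real.rpow_pos_of_pos hv κ
    have p3 : 0 < τ ^ (κ/iG) := Real.rpow_pos_of_pos hτ0 _
    have p4 : 0 < T ^ (κ/iG) := Real.rpow_pos_of_pos hT _
    rw [mul_assoc, ← mul_inv, inv_eq_one_div, inv_eq_one_div, mul_one_div,
      div_le_div_iff₀ p1 (by positivity)]
    nlinarith [h2]
  -- integrability
  have hfint : ∀ T : ℝ, 0 < T →
      IntegrableOn (fun τ : ℝ => Ginv τ ^ (-κ)) (Ioc 0 T) volume := by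
    intro T hT
    have hmaj : IntegrableOn
        (fun τ : ℝ => T ^ (κ/iG) * Ginv T ^ (-κ) * τ ^ (-(κ/iG))) (Ioc 0 T) volume := by
      have hr : (-1 : ℝ) < -(κ/iG) := by
        have : κ/iG < 1 := (div_lt_one hiG0).2 hκ₂
        linarith
      have h := intervalIntegral.intervalIntegrable_rpow' (a := 0) (b := T) hr
      rw [intervalIntegrable_iff_integrableOn_Ioc_of_le hT.le] at h
      exact h.const_mul _
    have hmeas : Measurable (fun τ : ℝ => Ginv (max 0 τ) ^ (-κ)) := by
      have hmono : Monotone fun τ : ℝ => Ginv (max 0 τ) := by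
        intro x y hxy
        exact hGinvmono _ _ (le_max_left _ _) (max_le_max le_rfl hxy)
      exact hmono.measurable.pow measurable_const
    have h0 : IntegrableOn (fun τ : ℝ => Ginv (max 0 τ) ^ (-κ)) (Ioc 0 T) volume := by
      apply Integrable.mono' hmaj (hmeas.aestronglyMeasurable.restrict)
      refine (ae_restrict_iff' measurableSet_Ioc).2 (ae_of_all _ ?_)
      intro τ hτ
      rw [max_eq_right hτ.1.le]
      rw [Real.norm_eq_abs, abs_of_nonneg (Real.rpow_nonneg (hGinv τ hτ.1.le).2.2 _)]
      exact hkey T hT τ hτ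
    exact h0.congr_fun (fun τ hτ => by dsimp only; rw [max_eq_right hτ.1.le]) measurableSet_Ioc
  -- upper bound for hinv
  have hinv_up : ∀ T : ℝ, 0 < T → hinv T ≤ iG/(iG-κ) * (T * Ginv T ^ (-κ)) := by
    intro T hT
    rw [hhinv, intervalIntegral.integral_of_le hT.le]
    have hmaj : IntegrableOn
        (fun τ : ℝ => T ^ (κ/iG) * Ginv T ^ (-κ) * τ ^ (-(κ/iG))) (Ioc 0 T) volume := by
      have hr : (-1 : ℝ) < -(κ/iG) := by
        have : κ/iG < 1 := (div_lt_one hiG0).2 hκ₂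
        linarith
      have h := intervalIntegral.intervalIntegrable_rpow' (a := 0) (b := T) hr
      rw [intervalIntegrable_iff_integrableOn_Ioc_of_le hT.le] at h
      exact h.const_mul _
    have h1' : (∫ τ in Ioc (0:ℝ) T, Ginv τ ^ (-κ)) ≤
        ∫ τ in Ioc (0:ℝ) T, T ^ (κ/iG) * Ginv T ^ (-κ) * τ ^ (-(κ/iG)) :=
      setIntegral_mono_on (hfint T hT) hmaj measurableSet_Ioc (hkey T hT)
    have h2 : (∫ τ in Ioc (0:ℝ) T, T ^ (κ/iG) * Ginv T ^ (-κ) * τ ^ (-(κ/iG)))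
        = T ^ (κ/iG) * Ginv T ^ (-κ) * ∫ τ in Ioc (0:ℝ) T, τ ^ (-(κ/iG)) := by
      rw [← MeasureTheory.integral_const_mul]
    have h3 : (∫ τ in Ioc (0:ℝ) T, τ ^ (-(κ/iG))) = T ^ (1 - κ/iG) / (1 - κ/iG) := by
      rw [← intervalIntegral.integral_of_le hT.le]
      have hr : (-1 : ℝ) < -(κ/iG) := by
        have : κ/iG < 1 := (div_lt_one hiG0).2 hκ₂
        linarith
      rw [integral_rpow (Or.inl hr)]
      rw [Real.zero_rpow (by intro h; rw [show -(κ/iG) + 1 = 1 - κ/iG by ring] at h; nlinarith [(div_lt_one hiG0).2 hκ₂] : -(κ/iG) + 1 ≠ 0)]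
      rw [show -(κ/iG) + 1 = 1 - κ/iG by ring]
      ring
    have hd : 0 < 1 - κ/iG := by
      have : κ/iG < 1 := (div_lt_one hiG0).2 hκ₂
      linarith
    have heq : T ^ (κ/iG) * Ginv T ^ (-κ) * (T ^ (1 - κ/iG) / (1 - κ/iG))
        = iG/(iG-κ) * (T * Ginv T ^ (-κ)) := by
      have eT : T ^ (κ/iG) * T ^ (1 - κ/iG) = T := by
        rw [← Real.rpow_add hT]
        norm_num
      have e1 : 1 - κ/iG = (iG - κ)/iG := by field_simp
      calc T ^ (κ/iG) * Ginv T ^ (-κ) * (T ^ (1 - κ/iG) / (1 - κ/iG))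
          = (T ^ (κ/iG) * T ^ (1 - κ/iG)) * Ginv T ^ (-κ) / (1 - κ/iG) := by ring
        _ = T * Ginv T ^ (-κ) / ((iG - κ)/iG) := by rw [eT, e1]
        _ = iG/(iG-κ) * (T * Ginv T ^ (-κ)) := by
            rw [div_div_eq_mul_div]
            field_simp
    calc (∫ τ in Ioc (0:ℝ) T, Ginv τ ^ (-κ))
        ≤ ∫ τ in Ioc (0:ℝ) T, T ^ (κ/iG) * Ginv T ^ (-κ) * τ ^ (-(κ/iG)) := h1'
      _ = T ^ (κ/iG) * Ginv T ^ (-κ) * (T ^ (1 - κ/iG) / (1 - κ/iG)) := by rw [h2, h3]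
      _ = iG/(iG-κ) * (T * Ginv T ^ (-κ)) := heq
  -- lower bound for hinv
  have hinv_low : ∀ T : ℝ, 0 < T → T * Ginv T ^ (-κ) ≤ hinv T := by
    intro T hT
    rw [hhinv, intervalIntegral.integral_of_le hT.le]
    have hconst : IntegrableOn (fun _ : ℝ => Ginv T ^ (-κ)) (Ioc 0 T) volume := by
      refine integrableOn_const ?_
      rw [Real.volume_Ioc]
      exact ENNReal.ofReal_ne_top
    have h1' : (∫ _ in Ioc (0:ℝ) T, Ginv T ^ (-κ)) ≤ ∫ τ in Ioc (0:ℝ) T, Ginv τ ^ (-κ) := by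
      apply setIntegral_mono_on hconst (hfint T hT) measurableSet_Ioc
      intro τ hτ
      exact Real.rpow_le_rpow_of_nonpos (hGinvpos τ hτ.1) (hGinvmono τ T hτ.1.le hτ.2)
        (by linarith)
    have h2 : (∫ _ in Ioc (0:ℝ) T, Ginv T ^ (-κ)) = T * Ginv T ^ (-κ) := by
      rw [setIntegral_const, measureReal_def, Real.volume_Ioc, sub_zero, ENNReal.toReal_ofReal hT.le,
        smul_eq_mul]
    linarith
  have hinv_pos : ∀ T : ℝ, 0 < T → 0 < hinv T := by
    intro T hT
    have := hinv_low T hT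
    have h2 : 0 < T * Ginv T ^ (-κ) := by
      have := hGinvpos T hT
      positivity
    linarith
  have hinv0 : hinv 0 = 0 := by
    rw [hhinv]
    exact intervalIntegral.integral_same
  -- surjectivity of hinv on positives
  have hbig : ∀ y : ℝ, 0 < y → ∃ M, 0 < M ∧ y ≤ hinv M := by
    intro y hy
    set u0 : ℝ := (max 1 (y / G 1)) ^ (1/(iG - κ)) with hu0def
    have hmax1 : (1:ℝ) ≤ max 1 (y / G 1) := le_max_left _ _
    have hu0ge1 : 1 ≤ u0 := Real.one_le_rpow hmax1 (by positivity)
    have hu0pos : 0 < u0 := lt_of_lt_of_le one_pos hu0ge1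
    have hu0pow : u0 ^ (iG - κ) = max 1 (y / G 1) := by
      rw [hu0def, ← Real.rpow_mul (le_trans zero_le_one hmax1), one_div,
        inv_mul_cancel₀ (ne_of_gt hiκ), Real.rpow_one]
    refine ⟨G u0, hGpos u0 hu0pos, ?_⟩
    have h1' : G u0 * Ginv (G u0) ^ (-κ) ≤ hinv (G u0) := hinv_low _ (hGpos u0 hu0pos)
    rw [(hGinv u0 hu0pos.le).1] at h1'
    have h2 : G 1 * u0 ^ iG ≤ G u0 * (1:ℝ) ^ iG :=
      ratio_lower hG' (fun t ht => (hbd t ht).1) one_pos hu0ge1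
    rw [Real.one_rpow, mul_one] at h2
    have h3 : G 1 * u0 ^ (iG - κ) ≤ G u0 * u0 ^ (-κ) := by
      have e : u0 ^ (iG - κ) = u0 ^ iG * u0 ^ (-κ) := by
        rw [← Real.rpow_add hu0pos]
        ring_nf
      rw [e]
      calc G 1 * (u0 ^ iG * u0 ^ (-κ)) = (G 1 * u0 ^ iG) * u0 ^ (-κ) := by ring
        _ ≤ G u0 * u0 ^ (-κ) := mul_le_mul_of_nonneg_right h2 (Real.rpow_nonneg hu0pos.le _)
    have h4 : y ≤ G 1 * u0 ^ (iG - κ) := by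
      rw [hu0pow]
      rcases le_total (y / G 1) 1 with hc | hc
      · rw [max_eq_left hc, mul_one]
        exact (div_le_one (hGpos 1 one_pos)).1 hc
      · rw [max_eq_right hc, mul_comm, div_mul_cancel₀ y (ne_of_gt (hGpos 1 one_pos))]
    linarith
  have hcontOn : ∀ M : ℝ, 0 < M → ContinuousOn hinv (Icc 0 M) := by
    intro M hM
    have hIcc : IntegrableOn (fun τ : ℝ => Ginv τ ^ (-κ)) (Icc 0 M) volume :=
      (integrableOn_Icc_iff_integrableOn_Ioc (by simp)).2 (hfint M hM)
    have h := continuousOn_primitive_interval (a := 0) (b := M) (μ := volume)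
      (f := fun τ : ℝ => Ginv τ ^ (-κ)) (by rwa [Set.uIcc_of_le hM.le])
    rw [Set.uIcc_of_le hM.le] at h
    exact h.congr (fun x _ => hhinv x)
  have hsurj : ∀ y : ℝ, 0 < y → ∃ T, 0 < T ∧ hinv T = y := by
    intro y hy
    obtain ⟨M, hM, hMy⟩ := hbig y hy
    have hiv := intermediate_value_Icc hM.le (hcontOn M hM)
    obtain ⟨T, hTmem, hTy⟩ := hiv ⟨by rw [hinv0]; exact hy.le, hMy⟩
    refine ⟨T, ?_, hTy⟩
    rcases eq_or_lt_of_le hTmem.1 with h | h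
    · exfalso
      rw [← h, hinv0] at hTy
      linarith
    · exact h
  have hκpos' : ∀ τ : ℝ, 0 < τ → 0 < hκfun τ ∧ hinv (hκfun τ) = τ := by
    intro τ hτ
    obtain ⟨T, hT, hTτ⟩ := hsurj τ hτ
    have hκτ : hκfun τ = T := by rw [← hTτ]; exact (hκinv T hT.le).1
    rw [hκτ]
    exact ⟨hT, hTτ⟩
  have hGscale : ∀ u α : ℝ, 0 < u → 1 ≤ α → G (α * u) ≤ α ^ sG * G u := by
    intro u α hu hα
    have hαu : u ≤ α * u := le_mul_of_one_le_left hu.le hα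
    have h := ratio_upper hG' (fun t ht => (hbd t ht).2) hu hαu
    rw [Real.mul_rpow (le_trans zero_le_one hα) hu.le] at h
    have hus : 0 < u ^ sG := Real.rpow_pos_of_pos hu sG
    have h' : G (α * u) * u ^ sG ≤ (α ^ sG * G u) * u ^ sG := by
      calc G (α * u) * u ^ sG ≤ G u * (α ^ sG * u ^ sG) := h
        _ = (α ^ sG * G u) * u ^ sG := by ring
    exact le_of_mul_le_mul_right h' hus
  have hGratκ : ∀ a b : ℝ, 0 < a → a ≤ b → G a * b ^ κ ≤ G b * a ^ κ := by
    intro a b ha hab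
    apply ratio_lower hG' (fun t ht => ?_) ha hab
    calc κ * G t ≤ iG * G t := mul_le_mul_of_nonneg_right hκ₂.le (hGpos t ht).le
      _ ≤ t * g t := (hbd t ht).1
  set C₀ : ℝ := iG / (iG - κ) with hC₀def
  have hC₀1 : 1 ≤ C₀ := by
    rw [hC₀def, le_div_iff₀ hiκ]
    linarith
  have hC₀pos : 0 < C₀ := lt_of_lt_of_le one_pos hC₀1
  refine ⟨(2:ℝ) ^ (-(sG/κ)), (2*C₀) ^ (sG/κ) / 2, Real.rpow_pos_of_pos two_pos _,
    div_pos (Real.rpow_pos_of_pos (by linarith) _) two_pos, ?_⟩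
  intro t ht
  have htκ : 0 < t ^ (1/κ) := Real.rpow_pos_of_pos ht _
  have hGtκ : 0 < G (t ^ (1/κ)) := hGpos _ htκ
  constructor
  · -- lower bound
    set u : ℝ := (t/2) ^ (1/κ) with hudef
    have hu : 0 < u := Real.rpow_pos_of_pos (by linarith) _
    have huκ : u ^ κ = t/2 := by
      rw [hudef, ← Real.rpow_mul (by linarith : (0:ℝ) ≤ t/2), one_div,
        inv_mul_cancel₀ hκ0.ne', Real.rpow_one]
    have hT : 0 < G u := hGpos u hu
    set τ₀ : ℝ := hinv (G u) with hτ₀def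
    have hτ₀pos : 0 < τ₀ := hinv_pos _ hT
    have hκτ₀ : hκfun τ₀ = G u := (hκinv (G u) hT.le).1
    have hlow : G u * u ^ (-κ) ≤ τ₀ := by
      have := hinv_low (G u) hT
      rwa [(hGinv u hu.le).1] at this
    have huneg : u ^ (-κ) = 2/t := by
      rw [Real.rpow_neg hu.le, huκ, inv_div]
    have hval : G u ≤ t * τ₀ - hκfun τ₀ := by
      rw [hκτ₀]
      have h5 : t * (G u * (2/t)) ≤ t * τ₀ := by
        apply mul_le_mul_of_nonneg_left _ ht.le
        rw [← huneg]; exact hlow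
      have h6 : t * (G u * (2/t)) = 2 * G u := by
        field_simp
      linarith
    have htu : t ^ (1/κ) = 2 ^ (1/κ) * u := by
      rw [hudef, Real.div_rpow ht.le (by norm_num : (0:ℝ) ≤ 2)]
      have h2p : (0:ℝ) < 2 ^ (1/κ) := Real.rpow_pos_of_pos two_pos _
      field_simp
    have h2κ : (1:ℝ) ≤ 2 ^ (1/κ) := Real.one_le_rpow one_le_two (by positivity)
    have hsc : G (t ^ (1/κ)) ≤ 2 ^ (sG/κ) * G u := by
      rw [htu]
      have hthis := hGscale u (2 ^ (1/κ)) hu h2κ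
      have he : ((2:ℝ) ^ (1/κ)) ^ sG = 2 ^ (sG/κ) := by
        rw [← Real.rpow_mul (by norm_num : (0:ℝ) ≤ 2)]
        ring_nf
      rwa [he] at hthis
    have hc1 : (2:ℝ) ^ (-(sG/κ)) * G (t ^ (1/κ)) ≤ G u := by
      have hp : (0:ℝ) < 2 ^ (sG/κ) := Real.rpow_pos_of_pos two_pos _
      rw [Real.rpow_neg (by norm_num : (0:ℝ) ≤ 2), inv_mul_le_iff₀ hp]
      exact hsc
    have hfinal : (2:ℝ) ^ (-(sG/κ)) * G (t ^ (1/κ)) ≤ t * τ₀ - hκfun τ₀ := le_trans hc1 hval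
    calc (↑((2:ℝ) ^ (-(sG/κ)) * G (t ^ (1/κ))) : EReal) ≤ ((t * τ₀ - hκfun τ₀ : ℝ) : EReal) :=
          EReal.coe_le_coe_iff.2 hfinal
      _ ≤ ⨆ τ : {τ : ℝ // 0 < τ}, ((t * τ.1 - hκfun τ.1 : ℝ) : EReal) :=
          le_iSup (fun τ : {τ : ℝ // 0 < τ} => ((t * τ.1 - hκfun τ.1 : ℝ) : EReal)) ⟨τ₀, hτ₀pos⟩
  · -- upper bound
    apply iSup_le
    rintro ⟨τ, hτ⟩
    apply EReal.coe_le_coe_iff.2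
    obtain ⟨hTpos, hinvT⟩ := hκpos' τ hτ
    have hu : 0 < Ginv (hκfun τ) := hGinvpos _ hTpos
    have hGu : G (Ginv (hκfun τ)) = hκfun τ := (hGinv _ hTpos.le).2.1
    have hτup : τ ≤ C₀ * (hκfun τ * Ginv (hκfun τ) ^ (-κ)) := by
      rw [← hC₀def] at *
      calc τ = hinv (hκfun τ) := hinvT.symm
        _ ≤ C₀ * (hκfun τ * Ginv (hκfun τ) ^ (-κ)) := hinv_up _ hTpos
    set u : ℝ := Ginv (hκfun τ) with hudefu
    set u₀ : ℝ := (2*C₀*t) ^ (1/κ) with hu₀def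
    have h2C₀t : 0 < 2*C₀*t := by positivity
    have hu₀ : 0 < u₀ := Real.rpow_pos_of_pos h2C₀t _
    have hu₀κ : u₀ ^ κ = 2*C₀*t := by
      rw [hu₀def, ← Real.rpow_mul h2C₀t.le, one_div, inv_mul_cancel₀ hκ0.ne', Real.rpow_one]
    have hα1 : (1:ℝ) ≤ (2*C₀) ^ (1/κ) := Real.one_le_rpow (by linarith) (by positivity)
    have hGu₀ : G u₀ ≤ (2*C₀) ^ (sG/κ) * G (t ^ (1/κ)) := by
      have he : u₀ = (2*C₀) ^ (1/κ) * t ^ (1/κ) := by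
        rw [hu₀def, Real.mul_rpow (by positivity) ht.le]
      rw [he]
      have hthis := hGscale (t ^ (1/κ)) ((2*C₀) ^ (1/κ)) htκ hα1
      have he2 : (((2*C₀):ℝ) ^ (1/κ)) ^ sG = (2*C₀) ^ (sG/κ) := by
        rw [← Real.rpow_mul (by positivity)]
        ring_nf
      rwa [he2] at hthis
    rcases le_or_gt u u₀ with hcase | hcase
    · have hrat : hκfun τ * u₀ ^ κ ≤ G u₀ * u ^ κ := by
        have hthis := hGratκ u u₀ hu hcase
        rwa [hGu] at hthis
      have huκpos : 0 < u ^ κ := Real.rpow_pos_of_pos hu κ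
      have hu₀κpos : 0 < u₀ ^ κ := Real.rpow_pos_of_pos hu₀ κ
      have hTu : hκfun τ * u ^ (-κ) ≤ G u₀ / (2*C₀*t) := by
        rw [Real.rpow_neg hu.le, ← hu₀κ, ← div_eq_mul_inv,
          div_le_div_iff₀ huκpos hu₀κpos]
        nlinarith [hrat]
      have hstep : t * τ ≤ G u₀ / 2 := by
        calc t * τ ≤ t * (C₀ * (hκfun τ * u ^ (-κ))) := mul_le_mul_of_nonneg_left hτup ht.le
          _ ≤ t * (C₀ * (G u₀ / (2*C₀*t))) := by
              apply mul_le_mul_of_nonneg_left _ ht.le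
              exact mul_le_mul_of_nonneg_left hTu hC₀pos.le
          _ = G u₀ / 2 := by
              field_simp
      have h9 : t * τ - hκfun τ ≤ G u₀ / 2 := by linarith
      have h10 : G u₀ / 2 ≤ (2*C₀) ^ (sG/κ) / 2 * G (t ^ (1/κ)) := by linarith
      linarith
    · have hmono2 : u ^ (-κ) ≤ u₀ ^ (-κ) :=
        Real.rpow_le_rpow_of_nonpos hu₀ hcase.le (by linarith)
      have h5 : τ ≤ C₀ * (hκfun τ * u₀ ^ (-κ)) := by
        refine le_trans hτup ?_
        apply mul_le_mul_of_nonneg_left _ hC₀pos.le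
        exact mul_le_mul_of_nonneg_left hmono2 hTpos.le
      have h6 : u₀ ^ (-κ) = (2*C₀*t)⁻¹ := by rw [Real.rpow_neg hu₀.le, hu₀κ]
      rw [h6] at h5
      have h7 : C₀ * (hκfun τ * (2*C₀*t)⁻¹) = hκfun τ/(2*t) := by
        field_simp
      rw [h7] at h5
      have h8 : t * τ ≤ t * (hκfun τ/(2*t)) := mul_le_mul_of_nonneg_left h5 ht.le
      have h9 : t * (hκfun τ/(2*t)) = hκfun τ/2 := by
        field_simp
      have h10 : t * τ - hκfun τ ≤ 0 := by
        rw [h9] at h8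
        linarith
      have h11 := mul_nonneg
        (le_of_lt (div_pos (Real.rpow_pos_of_pos (by linarith : (0:ℝ) < 2*C₀) (sG/κ)) two_pos))
        hGtκ.le
      linarith
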